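/- For every nonzero rational number r, the number e^r = exp(r) is irrational. -/

import Mathlib

open Polynomial intervalIntegral
open scoped Nat

lemma hermite_integral (P : Polynomial ℝ) (s : ℝ) :
    ∫ x in (0:ℝ)..s, Real.exp (s - x) * P.eval x
      = Real.exp s * (P.sumIDeriv).eval 0 - (P.sumIDeriv).eval s := by
  have key : ∀ x ∈ Set.uIcc (0:ℝ) s,
      HasDerivAt (fun y => -(Real.exp (s - y) * (P.sumIDeriv).eval y))
      (Real.exp (s - x) * P.eval x) x := by
    intro x _
    have h1 : HasDerivAt (fun y : ℝ => Real.exp (s - y)) (-Real.exp (s - x)) x := by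
      have h := (Real.hasDerivAt_exp (s-x)).comp x ((hasDerivAt_id x).const_sub s)
      simp only [id, mul_neg, mul_one] at h
      exact h
    have h2 : HasDerivAt (fun y => (P.sumIDeriv).eval y) ((P.sumIDeriv).derivative.eval x) x :=
      P.sumIDeriv.hasDerivAt x
    have h3 := (h1.mul h2).neg
    refine h3.congr_deriv ?_
    have hF : (P.sumIDeriv).eval x = P.eval x + ((P.sumIDeriv).derivative).eval x := by
      conv_lhs => rw [Polynomial.sumIDeriv_eq_self_add P]
      simp
    rw [hF]; ring
  have hcont : IntervalIntegrable (fun x => Real.exp (s - x) * P.eval x)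
      MeasureTheory.volume 0 s :=
    (Continuous.mul (by continuity) (Polynomial.continuous P)).intervalIntegrable 0 s
  rw [intervalIntegral.integral_eq_sub_of_hasDerivAt key hcont]
  simp [Real.exp_zero]
  ring

lemma hermite_dvd (n m : ℕ) :
    (m ! : ℤ) ∣ ((Polynomial.X ^ m * (Polynomial.C (n:ℤ) - Polynomial.X) ^ m).sumIDeriv).eval 0 ∧
    (m ! : ℤ) ∣ ((Polynomial.X ^ m * (Polynomial.C (n:ℤ) - Polynomial.X) ^ m).sumIDeriv).eval (n:ℤ) := by
  set P : Polynomial ℤ := Polynomial.X ^ m * (Polynomial.C (n:ℤ) - Polynomial.X) ^ m with hP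
  have hmap : ∀ (Q : Polynomial ℤ), Q.map (algebraMap ℤ ℤ) = Q := by
    intro Q
    simp [algebraMap_int_eq, Int.castRingHom_int, Polynomial.map_id]
  obtain ⟨gp, _, h⟩ := Polynomial.aeval_sumIDeriv ℤ P m
  constructor
  · have h0 := h (0:ℤ)
      (by rw [hmap]; simp only [Polynomial.C_0, sub_zero]; exact dvd_mul_right _ _)
    refine ⟨Polynomial.eval 0 gp, ?_⟩
    simpa [Polynomial.aeval_def, Polynomial.eval₂_eq_eval_map, hmap, nsmul_eq_mul] using h0
  · have h0 := h (n:ℤ)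
      (by
        rw [hmap]
        refine ⟨(-1)^m * Polynomial.X ^ m, ?_⟩
        rw [hP, ← mul_assoc, ← mul_pow (Polynomial.X - Polynomial.C (n:ℤ)) (-1),
          show ((Polynomial.X : Polynomial ℤ) - Polynomial.C (n:ℤ)) * (-1) = Polynomial.C (n:ℤ) - Polynomial.X by ring]
        ring)
    refine ⟨Polynomial.eval (n:ℤ) gp, ?_⟩
    simpa [Polynomial.aeval_def, Polynomial.eval₂_eq_eval_map, hmap, nsmul_eq_mul] using h0

lemma exp_nat_irrational (n : ℕ) (hn : 0 < n) : Irrational (Real.exp n) := by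
  rw [Irrational]
  intro hcon
  obtain ⟨a, ha⟩ := hcon
  have hexp_pos : (0:ℝ) < Real.exp n := Real.exp_pos _
  set A : ℤ := a.num with hA
  set B : ℤ := (a.den : ℤ) with hBdef
  have hB : (0:ℝ) < (B:ℝ) := by
    have := a.pos
    rw [hBdef]
    push_cast
    exact_mod_cast this
  have hBA : (B:ℝ) * Real.exp n = (A:ℝ) := by
    rw [← ha, Rat.cast_def]
    field_simp
    rw [hA, hBdef]
    push_cast
    ring
  have hnR : (0:ℝ) < (n:ℝ) := by exact_mod_cast hn
  -- choose m large
  obtain ⟨m, hm2⟩ : ∃ m : ℕ,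
      (B:ℝ) * Real.exp n * n * ((n:ℝ)^2)^m < (m ! : ℝ) := by
    have hc : (0:ℝ) < (B:ℝ) * Real.exp n * n := by positivity
    have h := (FloorSemiring.tendsto_pow_div_factorial_atTop ((n:ℝ)^2)).eventually_lt_const
      (by positivity : (0:ℝ) < ((B:ℝ) * Real.exp n * n)⁻¹)
    obtain ⟨m, hm⟩ := h.exists
    refine ⟨m, ?_⟩
    have hfac : (0:ℝ) < (m ! : ℝ) := by exact_mod_cast m.factorial_pos
    rw [div_lt_iff₀ hfac] at hm
    calc (B:ℝ) * Real.exp n * n * ((n:ℝ)^2)^m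
        < (B:ℝ) * Real.exp n * n * (((B:ℝ) * Real.exp n * n)⁻¹ * (m ! : ℝ)) := by
          exact mul_lt_mul_of_pos_left hm hc
      _ = (m ! : ℝ) := by field_simp
  -- the polynomial
  obtain ⟨hd0, hdn⟩ := hermite_dvd n m
  obtain ⟨u, hu⟩ := hd0
  obtain ⟨v, hv⟩ := hdn
  set Pr : Polynomial ℝ :=
    (Polynomial.X ^ m * (Polynomial.C (n:ℤ) - Polynomial.X) ^ m).map (Int.castRingHom ℝ) with hPr
  have hPr_eq : Pr = Polynomial.X ^ m * (Polynomial.C (n:ℝ) - Polynomial.X) ^ m := by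
    simp [hPr, Polynomial.map_mul, Polynomial.map_pow, Polynomial.map_sub]
  have hPr_eval : ∀ x : ℝ, Pr.eval x = x ^ m * ((n:ℝ) - x) ^ m := by
    intro x; simp [hPr_eq]
  set I : ℝ := ∫ x in (0:ℝ)..(n:ℝ), Real.exp ((n:ℝ) - x) * Pr.eval x with hI
  have hIval : I = Real.exp n * ((Pr.sumIDeriv).eval 0) - (Pr.sumIDeriv).eval (n:ℝ) :=
    hermite_integral Pr (n:ℝ)
  have hF0 : (Pr.sumIDeriv).eval 0 = ((m ! * u : ℤ) : ℝ) := by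
    rw [hPr, Polynomial.sumIDeriv_map,
      show (0:ℝ) = ((0:ℤ):ℝ) by norm_num, Polynomial.eval_intCast_map]
    simp only [Int.cast_id]
    rw [hu]; simp [Int.cast_mul]
  have hFn : (Pr.sumIDeriv).eval (n:ℝ) = ((m ! * v : ℤ) : ℝ) := by
    rw [hPr, Polynomial.sumIDeriv_map,
      show ((n:ℕ):ℝ) = (((n:ℕ):ℤ):ℝ) by push_cast; ring, Polynomial.eval_intCast_map]
    simp only [Int.cast_id]
    rw [hv]; simp [Int.cast_mul]
  -- I = m! * (A u - B v)
  have hIint : (B:ℝ) * I = ((m ! : ℤ) * (A * u - B * v) : ℤ) := by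
    rw [hIval, hF0, hFn]
    push_cast
    linear_combination ((m ! : ℝ) * (u:ℝ)) * hBA
  -- positivity of I
  have hIpos : 0 < I := by
    rw [hI]
    apply intervalIntegral.intervalIntegral_pos_of_pos_on
    · exact (Continuous.mul (by continuity) (Polynomial.continuous Pr)).intervalIntegrable 0 n
    · intro x hx
      rw [hPr_eval]
      have h1 : 0 < x := hx.1
      have h2 : x < n := hx.2
      have h3 : (0:ℝ) < (n:ℝ) - x := by linarith
      exact mul_pos (Real.exp_pos _) (mul_pos (pow_pos h1 m) (pow_pos h3 m))
    · exact hnR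
  -- upper bound on I
  have hIle : I ≤ Real.exp n * (n:ℝ)^(2*m) * n := by
    have hb : ‖I‖ ≤ Real.exp n * (n:ℝ)^(2*m) * |(n:ℝ) - 0| := by
      apply intervalIntegral.norm_integral_le_of_norm_le_const
      intro x hx
      rw [Set.uIoc_of_le hnR.le] at hx
      have h1 : 0 < x := hx.1
      have h2 : x ≤ n := hx.2
      rw [hPr_eval, Real.norm_eq_abs, abs_mul, abs_mul]
      have e1 : |Real.exp ((n:ℝ) - x)| ≤ Real.exp n := by
        rw [abs_of_pos (Real.exp_pos _)]
        exact Real.exp_le_exp.mpr (by linarith)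
      have e2 : |x ^ m| ≤ (n:ℝ)^m := by
        rw [abs_of_pos (pow_pos h1 m)]
        exact pow_le_pow_left₀ h1.le h2 m
      have e3 : |((n:ℝ) - x) ^ m| ≤ (n:ℝ)^m := by
        rw [abs_of_nonneg (pow_nonneg (by linarith) m)]
        exact pow_le_pow_left₀ (by linarith) (by linarith) m
      calc |Real.exp ((n:ℝ) - x)| * (|x ^ m| * |((n:ℝ) - x) ^ m|)
          ≤ Real.exp n * ((n:ℝ)^m * (n:ℝ)^m) := by
            apply mul_le_mul e1 (mul_le_mul e2 e3 (abs_nonneg _) (by positivity))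
              (by positivity) (le_of_lt hexp_pos)
      _ = Real.exp n * (n:ℝ)^(2*m) := by rw [← pow_add]; ring_nf
    calc I ≤ ‖I‖ := le_abs_self I
      _ ≤ Real.exp n * (n:ℝ)^(2*m) * |(n:ℝ) - 0| := hb
      _ = Real.exp n * (n:ℝ)^(2*m) * n := by rw [sub_zero, abs_of_pos hnR]
  -- integer ≥ 1
  have hint_pos : 0 < A * u - B * v := by
    have h1 : (0:ℝ) < ((m ! : ℤ) * (A * u - B * v) : ℤ) := by
      rw [← hIint]; positivity
    have h2 : (0:ℤ) < (m ! : ℤ) * (A * u - B * v) := by exact_mod_cast h1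
    have hfac : (0:ℤ) < (m ! : ℤ) := by exact_mod_cast m.factorial_pos
    nlinarith [h2, hfac]
  have hge1 : (1:ℤ) ≤ A * u - B * v := hint_pos
  have hfinal : (m ! : ℝ) ≤ (B:ℝ) * I := by
    rw [hIint]
    have : ((m ! : ℤ) : ℝ) * 1 ≤ ((m ! : ℤ) : ℝ) * ((A * u - B * v : ℤ) : ℝ) := by
      apply mul_le_mul_of_nonneg_left _ (by positivity)
      exact_mod_cast hge1
    push_cast at this ⊢
    linarith
  have hcontr : (B:ℝ) * I < (m ! : ℝ) := by
    calc (B:ℝ) * I ≤ (B:ℝ) * (Real.exp n * (n:ℝ)^(2*m) * n) := by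
          exact mul_le_mul_of_nonneg_left hIle hB.le
      _ = (B:ℝ) * Real.exp n * n * ((n:ℝ)^2)^m := by rw [← pow_mul]; ring
      _ < (m ! : ℝ) := hm2
  linarith

theorem exp_nonzero_rat_irrational (r : ℚ) (hr : r ≠ 0) :
    Irrational (Real.exp (r : ℝ)) := by
  intro hcon
  obtain ⟨c, hc⟩ := hcon
  have hnum0 : r.num ≠ 0 := Rat.num_ne_zero.mpr hr
  have hnum : ((r.num : ℝ)) = (r:ℝ) * (r.den : ℝ) := by
    rw [Rat.cast_def]
    field_simp
  have hexpnum : Real.exp ((r.num : ℝ)) = ((c ^ r.den : ℚ) : ℝ) := by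
    rw [hnum, mul_comm, Real.exp_nat_mul, ← hc]
    push_cast
    ring
  have hk : 0 < r.num.natAbs := Int.natAbs_pos.mpr hnum0
  rcases lt_or_gt_of_ne hnum0 with hneg | hpos
  · have habs : ((r.num.natAbs : ℕ) : ℝ) = -(r.num : ℝ) := by
      rw [Nat.cast_natAbs, abs_of_neg hneg]; push_cast; ring
    have hmem : Real.exp ((r.num.natAbs : ℕ) : ℝ) = (((c ^ r.den)⁻¹ : ℚ) : ℝ) := by
      rw [habs, Real.exp_neg, hexpnum]
      push_cast
      ring
    exact exp_nat_irrational _ hk ⟨(c ^ r.den)⁻¹, hmem.symm⟩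
  · have habs : ((r.num.natAbs : ℕ) : ℝ) = (r.num : ℝ) := by
      rw [Nat.cast_natAbs, abs_of_pos hpos]
    have hmem : Real.exp ((r.num.natAbs : ℕ) : ℝ) = ((c ^ r.den : ℚ) : ℝ) := by
      rw [habs, hexpnum]
    exact exp_nat_irrational _ hk ⟨c ^ r.den, hmem.symm⟩
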